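/- Let (R, f) be a Reeb poset with Reeb metric d_f. For comparable x ≤ y, d_f(x, y) = f(y) − f(x); in general d_f(x, y) ≥ |f(x) − f(y)|, and moreover d_f(x, y) can be realized as the f-length of a poset path whose image is a fence. -/
import Mathlib


open scoped Classical

namespace ReebPoset

variable {X : Type*}

/-- Two elements of a poset are comparable. -/
def Cmp [PartialOrder X] (a b : X) : Prop := a ≤ b ∨ b ≤ a

/-- A poset path from `x` to `y`: a finite sequence of consecutively comparable elements. -/
structure Path [PartialOrder X] (x y : X) where
  n : ℕ
  pts : Fin (n + 1) → X
  first : pts 0 = x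
  last : pts (Fin.last n) = y
  step : ∀ i : Fin n, Cmp (pts i.castSucc) (pts i.succ)

/-- A poset is connected if any two points are joined by a poset path. -/
def Connected (X : Type*) [PartialOrder X] : Prop := ∀ x y : X, Nonempty (Path x y)

/-- The `f`-length of a poset path. -/
noncomputable def flen [PartialOrder X] (f : X → ℝ) {x y : X} (γ : Path x y) : ℝ :=
  ∑ i : Fin γ.n, |f (γ.pts i.succ) - f (γ.pts i.castSucc)|

/-- The metric induced by the filtration `f` (the Reeb metric). -/
noncomputable def df [PartialOrder X] (f : X → ℝ) (x y : X) : ℝ :=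
  sInf {L | ∃ γ : Path x y, L = flen f γ}

/-- The Gromov product associated to `f`. -/
noncomputable def gf [PartialOrder X] (f : X → ℝ) (x y : X) : ℝ :=
  (f x + f y - df f x y) / 2

/-- The poset hyperbolicity of `(X, f)`. -/
noncomputable def hypf (X : Type*) [PartialOrder X] (f : X → ℝ) : ℝ :=
  sInf {ε : ℝ | 0 ≤ ε ∧ ∀ x y z : X, gf f x z ≥ min (gf f x y) (gf f y z) - ε}

/-- The merge value `m_f(x,y)`: max over poset paths of the min of `f` along the path. -/
noncomputable def mf [PartialOrder X] (f : X → ℝ) (x y : X) : ℝ :=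
  sSup {m | ∃ γ : Path x y,
    m = Finset.univ.inf' Finset.univ_nonempty (fun i : Fin (γ.n + 1) => f (γ.pts i))}

/-- A poset path is a fence if its points are distinct and non-consecutive points
are incomparable. -/
def IsFence [PartialOrder X] {x y : X} (γ : Path x y) : Prop :=
  Function.Injective γ.pts ∧
  ∀ i j : Fin (γ.n + 1), (i : ℕ) + 2 ≤ (j : ℕ) → ¬ Cmp (γ.pts i) (γ.pts j)

/-- The maximal length of a fence in the poset `X`. -/
noncomputable def MF (X : Type*) [PartialOrder X] : ℕ :=
  sSup {n : ℕ | ∃ x y : X, ∃ γ : Path x y, IsFence γ ∧ γ.n = n}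

/-- A merging point: an element covering at least two distinct elements. -/
def Merging [PartialOrder X] (x : X) : Prop := ∃ y z : X, y ≠ z ∧ y ⋖ x ∧ z ⋖ x

/-- A poset is a tree if every down-set is a chain. -/
def IsTreePoset (X : Type*) [PartialOrder X] : Prop :=
  ∀ a b c : X, a ≤ c → b ≤ c → (a ≤ b ∨ b ≤ a)

/-- The covering graph of a poset. -/
def covGraph (X : Type*) [PartialOrder X] : SimpleGraph X :=
  SimpleGraph.fromRel (fun a b => a ⋖ b)

/-- The number of elements covered by `x`. -/
noncomputable def iota [PartialOrder X] [Fintype X] (x : X) : ℕ :=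
  (Finset.univ.filter (fun y => y ⋖ x)).card

/-- The first Betti number of a graph: the minimal number of edges one needs to remove
to obtain a tree. -/
noncomputable def betti (G : SimpleGraph X) : ℕ :=
  sInf {k | ∃ s : Set (Sym2 X), s.ncard = k ∧ (G.deleteEdges s).IsTree}

/-- `x ∼ y` iff some poset path from `x` to `y` is `f`-constant. -/
def constRel [PartialOrder X] (f : X → ℝ) (x y : X) : Prop :=
  ∃ γ : Path x y, ∀ i : Fin (γ.n + 1), f (γ.pts i) = f x

/-- `[x] ≤ [y]` in the Reeb poset iff some poset path from `x` to `y` is `f`-nondecreasing. -/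
def ndRel [PartialOrder X] (f : X → ℝ) (x y : X) : Prop :=
  ∃ γ : Path x y, ∀ i : Fin γ.n, f (γ.pts i.castSucc) ≤ f (γ.pts i.succ)

/-- `x ∼ y` in the Reeb tree construction: some poset path from `x` to `y` has all
`f`-values at least `max (f x) (f y)`. -/
def treeEq [PartialOrder X] (f : X → ℝ) (x y : X) : Prop :=
  ∃ γ : Path x y, ∀ i : Fin (γ.n + 1), max (f x) (f y) ≤ f (γ.pts i)

/-- `[x] ≤ [y]` in the Reeb tree poset: some poset path from `x` to `y` has all
`f`-values at least `f x`. -/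
def treeLe [PartialOrder X] (f : X → ℝ) (x y : X) : Prop :=
  ∃ γ : Path x y, ∀ i : Fin (γ.n + 1), f x ≤ f (γ.pts i)

end ReebPoset

section Aux

open ReebPoset Finset

variable {R : Type*} [PartialOrder R]

/-- The points of a path, indexed by naturals (clamped at the end). -/
noncomputable def qP {x y : R} (γ : Path x y) (k : ℕ) : R :=
  γ.pts ⟨min k γ.n, Nat.lt_succ_of_le (min_le_right _ _)⟩

lemma qP_eq {x y : R} (γ : Path x y) {k : ℕ} (h : k ≤ γ.n) (p : k < γ.n + 1) :
    qP γ k = γ.pts ⟨k, p⟩ :=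
  congrArg γ.pts (Fin.ext (by simp [Nat.min_eq_left h]))

lemma qP_zero {x y : R} (γ : Path x y) : qP γ 0 = x := by
  have h : qP γ 0 = γ.pts 0 := congrArg γ.pts (Fin.ext (by simp))
  rw [h, γ.first]

lemma qP_ge {x y : R} (γ : Path x y) {k : ℕ} (h : γ.n ≤ k) : qP γ k = y := by
  have h2 : qP γ k = γ.pts (Fin.last γ.n) :=
    congrArg γ.pts (Fin.ext (by simp [Nat.min_eq_right h]))
  rw [h2, γ.last]

lemma qP_step {x y : R} (γ : Path x y) {k : ℕ} (h : k < γ.n) :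
    Cmp (qP γ k) (qP γ (k + 1)) := by
  rw [qP_eq γ (le_of_lt h) (by omega), qP_eq γ h (by omega)]
  exact γ.step ⟨k, h⟩

lemma flen_eq (f : R → ℝ) {x y : R} (γ : Path x y) :
    flen f γ = ∑ i ∈ Finset.range γ.n, |f (qP γ (i + 1)) - f (qP γ i)| := by
  rw [flen, ← Fin.sum_univ_eq_sum_range (fun i => |f (qP γ (i + 1)) - f (qP γ i)|) γ.n]
  apply Finset.sum_congr rfl
  intro i _
  rw [qP_eq γ (i.2 : (i : ℕ) < γ.n) (by omega), qP_eq γ (le_of_lt i.2) (by omega)]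
  rfl

lemma telescope_abs (h : ℕ → ℝ) {a b : ℕ} (hab : a ≤ b) :
    |h b - h a| ≤ ∑ j ∈ Finset.Ico a b, |h (j + 1) - h j| := by
  have he : h b - h a = ∑ j ∈ Finset.Ico a b, (h (j + 1) - h j) := by
    rw [Finset.sum_Ico_eq_sub _ hab, Finset.sum_range_sub, Finset.sum_range_sub]
    ring
  rw [he]
  exact Finset.abs_sum_le_sum_abs _ _

lemma key_mono (h : ℕ → ℝ) (φ : ℕ → ℕ) (mono : Monotone φ) (m : ℕ) :
    ∑ i ∈ Finset.range m, |h (φ (i + 1)) - h (φ i)| ≤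
      ∑ j ∈ Finset.Ico (φ 0) (φ m), |h (j + 1) - h j| := by
  induction m with
  | zero => simp
  | succ m ih =>
    rw [Finset.sum_range_succ,
      ← Finset.sum_Ico_consecutive _ (mono (Nat.zero_le m)) (mono (Nat.le_succ m))]
    exact add_le_add ih (telescope_abs h (mono (Nat.le_succ m)))

lemma flen_lb (f : R → ℝ) {x y : R} (γ : Path x y) : |f x - f y| ≤ flen f γ := by
  rw [flen_eq]
  have h1 : |f x - f y| = |f (qP γ γ.n) - f (qP γ 0)| := by
    rw [qP_zero, qP_ge γ le_rfl, abs_sub_comm]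
  rw [h1, ← Nat.Ico_zero_eq_range]
  exact telescope_abs (fun k => f (qP γ k)) (Nat.zero_le _)

lemma flen_nonneg (f : R → ℝ) {x y : R} (γ : Path x y) : 0 ≤ flen f γ :=
  Finset.sum_nonneg fun _ _ => abs_nonneg _

/-- Splicing out a segment of a path: remove `r` steps after position `a`. -/
lemma splice (f : R → ℝ) {x y : R} (γ : Path x y) (a r : ℕ) (hr : 1 ≤ r)
    (harn : a + r ≤ γ.n)
    (hstep : a + 1 + r ≤ γ.n → Cmp (qP γ a) (qP γ (a + 1 + r)))
    (hlast : γ.n - r = a → qP γ a = y) :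
    ∃ δ : Path x y, δ.n = γ.n - r ∧ flen f δ ≤ flen f γ := by
  set φ : ℕ → ℕ := fun i => if i ≤ a then i else i + r with hφ
  have hφmono : Monotone φ := by
    intro i j hij
    simp only [hφ]
    split <;> split <;> omega
  have hφle : ∀ k, k ≤ (γ.n - r) → φ k ≤ γ.n := by
    intro k hk; simp only [hφ]; split <;> omega
  have hφ0 : φ 0 = 0 := by simp [hφ]
  refine ⟨⟨(γ.n - r), fun i => qP γ (φ i), ?_, ?_, ?_⟩, rfl, ?_⟩
  · -- first
    show qP γ (φ ((0 : Fin ((γ.n - r) + 1)) : ℕ)) = x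
    rw [Fin.val_zero, hφ0, qP_zero]
  · -- last
    show qP γ (φ ((Fin.last (γ.n - r) : Fin ((γ.n - r) + 1)) : ℕ)) = y
    rw [Fin.val_last]
    by_cases hcs : γ.n - r ≤ a
    · have h1 : φ (γ.n - r) = γ.n - r := by simp only [hφ]; rw [if_pos hcs]
      have ha : γ.n - r = a := by omega
      rw [h1, ha]
      exact hlast ha
    · have h1 : φ (γ.n - r) = γ.n := by simp only [hφ]; rw [if_neg hcs]; omega
      rw [h1]
      exact qP_ge γ le_rfl
  · -- step
    intro i
    have hi : (i : ℕ) < (γ.n - r) := i.2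
    show Cmp (qP γ (φ ((i.castSucc : Fin ((γ.n - r) + 1)) : ℕ)))
      (qP γ (φ ((i.succ : Fin ((γ.n - r) + 1)) : ℕ)))
    rw [Fin.coe_castSucc, Fin.val_succ]
    by_cases h1 : (i : ℕ) + 1 ≤ a
    · have e1 : φ (i : ℕ) = (i : ℕ) := by simp only [hφ]; rw [if_pos (by omega)]
      have e2 : φ ((i : ℕ) + 1) = (i : ℕ) + 1 := by simp only [hφ]; rw [if_pos h1]
      rw [e1, e2]
      have hkn : (i : ℕ) < γ.n := by omega
      exact qP_step γ hkn
    · by_cases h2 : (i : ℕ) ≤ a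
      · have hia : (i : ℕ) = a := by omega
        have e1 : φ (i : ℕ) = a := by simp only [hφ]; rw [if_pos h2]; omega
        have e2 : φ ((i : ℕ) + 1) = a + 1 + r := by
          simp only [hφ]; rw [if_neg h1]; omega
        rw [e1, e2]
        have hkn : a + 1 + r ≤ γ.n := by omega
        exact hstep hkn
      · have e1 : φ (i : ℕ) = (i : ℕ) + r := by simp only [hφ]; rw [if_neg h2]
        have e2 : φ ((i : ℕ) + 1) = (i : ℕ) + r + 1 := by
          simp only [hφ]; rw [if_neg h1]; omega
        rw [e1, e2]
        have hkn : (i : ℕ) + r < γ.n := by omega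
        exact qP_step γ hkn
  · -- flen
    set δ : Path x y := ⟨(γ.n - r), fun i => qP γ (φ i), _, _, _⟩ with hδ
    have hδn : δ.n = (γ.n - r) := rfl
    have hg : ∀ k, k ≤ (γ.n - r) → qP δ k = qP γ (φ k) := by
      intro k hk
      have : qP δ k = qP γ (φ (min k (γ.n - r))) := rfl
      rw [this, Nat.min_eq_left hk]
    rw [flen_eq, flen_eq, hδn]
    have heq : ∀ i ∈ Finset.range (γ.n - r),
        |f (qP δ (i + 1)) - f (qP δ i)| = |f (qP γ (φ (i + 1))) - f (qP γ (φ i))| := by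
      intro i hi
      simp only [Finset.mem_range] at hi
      rw [hg (i + 1) (by omega), hg i (by omega)]
    rw [Finset.sum_congr rfl heq]
    calc ∑ i ∈ Finset.range (γ.n - r), |f (qP γ (φ (i + 1))) - f (qP γ (φ i))|
        ≤ ∑ j ∈ Finset.Ico (φ 0) (φ (γ.n - r)), |f (qP γ (j + 1)) - f (qP γ j)| :=
          key_mono (fun k => f (qP γ k)) φ hφmono (γ.n - r)
      _ ≤ ∑ j ∈ Finset.range γ.n, |f (qP γ (j + 1)) - f (qP γ j)| := by
          apply Finset.sum_le_sum_of_subset_of_nonneg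
          · intro j hj
            simp only [Finset.mem_Ico] at hj
            simp only [Finset.mem_range]
            have htop := hφle (γ.n - r) le_rfl
            omega
          · intro j _ _; exact abs_nonneg _
      _ = ∑ i ∈ Finset.range γ.n, |f (qP γ (i + 1)) - f (qP γ i)| := rfl

/-- Every path can be shortened to a fence of no greater `f`-length. -/
lemma toFence (f : R → ℝ) {x y : R} :
    ∀ N (γ : Path x y), γ.n ≤ N → ∃ δ : Path x y, IsFence δ ∧ flen f δ ≤ flen f γ := by
  intro N
  induction N with
  | zero =>
    intro γ hγ
    refine ⟨γ, ⟨?_, ?_⟩, le_refl _⟩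
    · intro i j _
      apply Fin.ext
      have hi := i.2; have hj := j.2
      omega
    · intro i j hij
      have hj := j.2
      omega
  | succ N ih =>
    intro γ hγ
    by_cases hF : IsFence γ
    · exact ⟨γ, hF, le_refl _⟩
    · have hbad : ∃ a r : ℕ, 1 ≤ r ∧ a + r ≤ γ.n ∧
          (a + 1 + r ≤ γ.n → Cmp (qP γ a) (qP γ (a + 1 + r))) ∧
          (γ.n - r = a → qP γ a = y) := by
        rw [IsFence, not_and_or] at hF
        rcases hF with hInj | hCmp
        · rw [Function.not_injective_iff] at hInj
          obtain ⟨i, j, hij, hne⟩ := hInj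
          have hwlog : ∃ u v : ℕ, u < v ∧ v ≤ γ.n ∧ qP γ u = qP γ v := by
            rcases lt_or_gt_of_ne (fun h : (i : ℕ) = (j : ℕ) => hne (Fin.ext h)) with h | h
            · refine ⟨(i : ℕ), (j : ℕ), h, Nat.lt_succ_iff.mp j.2, ?_⟩
              rw [qP_eq γ (Nat.lt_succ_iff.mp i.2) i.2, qP_eq γ (Nat.lt_succ_iff.mp j.2) j.2]
              simpa using hij
            · refine ⟨(j : ℕ), (i : ℕ), h, Nat.lt_succ_iff.mp i.2, ?_⟩
              rw [qP_eq γ (Nat.lt_succ_iff.mp j.2) j.2, qP_eq γ (Nat.lt_succ_iff.mp i.2) i.2]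
              simpa using hij.symm
          obtain ⟨u, v, huv, hvn, heq⟩ := hwlog
          refine ⟨u, v - u, by omega, by omega, ?_, ?_⟩
          · intro h
            have e : u + 1 + (v - u) = v + 1 := by omega
            rw [e, heq]
            exact qP_step γ (by omega)
          · intro h
            have : v = γ.n := by omega
            rw [heq, this]
            exact qP_ge γ le_rfl
        · push_neg at hCmp
          obtain ⟨i, j, hij, hcmp⟩ := hCmp
          have hjn : (j : ℕ) ≤ γ.n := Nat.lt_succ_iff.mp j.2
          refine ⟨(i : ℕ), (j : ℕ) - (i : ℕ) - 1, by omega, by omega, ?_, ?_⟩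
          · intro h
            have e : (i : ℕ) + 1 + ((j : ℕ) - (i : ℕ) - 1) = (j : ℕ) := by omega
            rw [e, qP_eq γ (Nat.lt_succ_iff.mp i.2) i.2, qP_eq γ hjn j.2]
            simpa using hcmp
          · intro h
            exfalso
            omega
      obtain ⟨a, r, hr, harn, hstep, hlast⟩ := hbad
      obtain ⟨δ, hδn, hδlen⟩ := splice f γ a r hr harn hstep hlast
      obtain ⟨ε, hεF, hεlen⟩ := ih δ (by omega)
      exact ⟨ε, hεF, le_trans hεlen hδlen⟩

end Aux

open ReebPoset in
/-- for a Reeb poset, `d_f(x,y) = f y - f x` when `x ≤ y`; in general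
`d_f(x,y) ≥ |f x - f y|`; and `d_f(x,y)` is realized by a fence. -/
theorem stmt14 {R : Type*} [PartialOrder R] [Fintype R]
    (hc : Connected R) (f : R → ℝ) (hf : StrictMono f) (x y : R) :
    (x ≤ y → df f x y = f y - f x) ∧
    |f x - f y| ≤ df f x y ∧
    (∃ γ : Path x y, IsFence γ ∧ flen f γ = df f x y) := by
  classical
  set S : Set ℝ := {L | ∃ γ : Path x y, L = flen f γ} with hS
  have hSne : S.Nonempty := ⟨flen f (hc x y).some, (hc x y).some, rfl⟩
  have hSlb : ∀ L ∈ S, |f x - f y| ≤ L := by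
    rintro L ⟨γ, rfl⟩
    exact flen_lb f γ
  have hbdd : BddBelow S := ⟨|f x - f y|, hSlb⟩
  have part2 : |f x - f y| ≤ df f x y := le_csInf hSne hSlb
  -- the set of lengths of fences
  set T : Set ℝ := {L | ∃ γ : Path x y, IsFence γ ∧ L = flen f γ} with hT
  have hTS : T ⊆ S := by
    rintro L ⟨γ, _, rfl⟩
    exact ⟨γ, rfl⟩
  have hTne : T.Nonempty := by
    obtain ⟨δ, hδF, _⟩ := toFence f (hc x y).some.n (hc x y).some le_rfl
    exact ⟨flen f δ, δ, hδF, rfl⟩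
  have hTfin : T.Finite := by
    set N := Fintype.card R with hN
    have hcard : ∀ γ : Path x y, IsFence γ → γ.n < N := by
      intro γ hF
      have h1 : Fintype.card (Fin (γ.n + 1)) ≤ N := Fintype.card_le_of_injective γ.pts hF.1
      simpa using h1
    set F : (Σ m : Fin N, (Fin ((m : ℕ) + 1) → R)) → ℝ :=
      fun p => ∑ i : Fin (p.1 : ℕ), |f (p.2 i.succ) - f (p.2 i.castSucc)| with hF
    have hsub : T ⊆ Set.range F := by
      rintro L ⟨γ, hγF, rfl⟩
      exact ⟨⟨⟨γ.n, hcard γ hγF⟩, γ.pts⟩, rfl⟩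
    exact Set.Finite.subset (Set.finite_range F) hsub
  have hmem : sInf T ∈ T := hTne.csInf_mem hTfin
  obtain ⟨γ0, hγ0F, hγ0len⟩ := hmem
  have hle1 : df f x y ≤ sInf T := by
    apply csInf_le hbdd
    apply hTS
    exact hTne.csInf_mem hTfin
  have hle2 : sInf T ≤ df f x y := by
    apply le_csInf hSne
    rintro L ⟨γ, rfl⟩
    obtain ⟨δ, hδF, hδle⟩ := toFence f γ.n γ le_rfl
    exact le_trans (csInf_le hTfin.bddBelow ⟨δ, hδF, rfl⟩) hδle
  have hdfT : df f x y = sInf T := le_antisymm hle1 hle2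
  refine ⟨?_, part2, γ0, hγ0F, by rw [← hγ0len, hdfT]⟩
  intro hxy
  -- the direct two-point path
  have hfl : f x ≤ f y := hf.monotone hxy
  set γd : Path x y :=
    ⟨1, fun i => if (i : ℕ) = 0 then x else y, by simp, by simp [Fin.last], by
      intro i
      left
      have hi := i.2
      have h0 : ((i.castSucc : Fin 2) : ℕ) = 0 := by
        simp only [Fin.coe_castSucc]; omega
      have h1 : ((i.succ : Fin 2) : ℕ) = 1 := by
        simp only [Fin.val_succ]; omega
      simp only [h0, h1]
      simpa using hxy⟩ with hγd
  have hflen : flen f γd = f y - f x := by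
    have : flen f γd = |f (γd.pts (0 : Fin 1).succ) - f (γd.pts (0 : Fin 1).castSucc)| := by
      rw [flen]
      exact Fin.sum_univ_one _
    rw [this]
    have e0 : γd.pts (0 : Fin 1).castSucc = x := by
      show (if (((0 : Fin 1).castSucc : Fin 2) : ℕ) = 0 then x else y) = x
      norm_num
    have e1 : γd.pts (0 : Fin 1).succ = y := by
      show (if (((0 : Fin 1).succ : Fin 2) : ℕ) = 0 then x else y) = y
      norm_num
    rw [e0, e1, abs_of_nonneg (by linarith)]
  have hub : df f x y ≤ f y - f x := by
    rw [← hflen]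
    exact csInf_le hbdd ⟨γd, rfl⟩
  have hlb2 : f y - f x ≤ df f x y := by
    have : |f x - f y| = f y - f x := by
      rw [abs_sub_comm, abs_of_nonneg (by linarith)]
    linarith [part2]
  linarith
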